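/- Let ρ_1,...,ρ_d be pairwise orthogonal rank-one projections on ℂ^N, Ω = (1/d)∑_n ρ_n, and ω = ∑_n p_n ρ_n for a probability distribution p. With respect to the measurement set M = {M_1,...,M_d} where M_m has binary outcomes ρ_m and I − ρ_m, the distinguishability D_M(ω,Ω) = max_m |p_m − 1/d| satisfies D_M(ω,Ω) ≤ 1/√(d_eff(ω)), where d_eff(ω) = (∑_n p_n²)⁻¹. -/

import Mathlib

open ComplexOrder

open Matrix in
/-- For orthonormal pure states `ρ_n`, their uniform mixture `Ω`, and a
time-averaged state `ω = ∑ p_n ρ_n`, each binary measurement `{ρ_m, I - ρ_m}`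
distinguishes `ω` from `Ω` by exactly `|p_m - 1/d|`, which is at most
`1/√(d_eff(ω)) = √(∑ p_n²)`. -/
theorem counterexample_thermalisation {N d : ℕ} (hd : 0 < d) (hdN : d ≤ N)
    (ρ : Fin d → Matrix (Fin N) (Fin N) ℂ)
    (hherm : ∀ n, (ρ n).IsHermitian)
    (hproj : ∀ n, ρ n * ρ n = ρ n)
    (htr : ∀ n, (ρ n).trace = 1)
    (horth : ∀ m n, m ≠ n → ρ m * ρ n = 0)
    (p : Fin d → ℝ) (hp : ∀ n, 0 ≤ p n) (hp1 : ∑ n, p n = 1) :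
    (∀ m : Fin d,
      (1 / 2 : ℝ) * (Norm.norm ((ρ m * ((∑ n, (p n : ℂ) • ρ n) - (1 / (d : ℂ)) • ∑ l, ρ l)).trace)
          + Norm.norm (((1 - ρ m) * ((∑ n, (p n : ℂ) • ρ n) - (1 / (d : ℂ)) • ∑ l, ρ l)).trace))
        = |p m - 1 / d|)
    ∧ ∀ m : Fin d, |p m - 1 / d| ≤ Real.sqrt (∑ n, (p n) ^ 2) := by
  have hdc : (d : ℂ) ≠ 0 := Nat.cast_ne_zero.mpr hd.ne'
  set X : Matrix (Fin N) (Fin N) ℂ :=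
    (∑ n, (p n : ℂ) • ρ n) - (1 / (d : ℂ)) • ∑ l, ρ l with hX
  have hXeq : X = ∑ n, ((p n : ℂ) - 1 / d) • ρ n := by
    rw [hX, Finset.smul_sum, ← Finset.sum_sub_distrib]
    exact Finset.sum_congr rfl fun n _ => (sub_smul _ _ _).symm
  have htrρρ : ∀ m n : Fin d, (ρ m * ρ n).trace = if m = n then 1 else 0 := by
    intro m n
    by_cases h : m = n
    · subst h; rw [hproj, htr, if_pos rfl]
    · rw [horth m n h, trace_zero, if_neg h]
  have key : ∀ m, (ρ m * X).trace = (p m : ℂ) - 1 / d := by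
    intro m
    rw [hXeq, Finset.mul_sum]
    simp only [Matrix.mul_smul, trace_sum, trace_smul, htrρρ, smul_eq_mul,
      mul_ite, mul_one, mul_zero]
    simp
  have htrX : X.trace = 0 := by
    rw [hXeq]
    simp only [trace_sum, trace_smul, htr, smul_eq_mul, mul_one]
    rw [Finset.sum_sub_distrib, Finset.sum_const, Finset.card_univ, Fintype.card_fin,
      nsmul_eq_mul]
    have h1 : ∑ n : Fin d, (p n : ℂ) = 1 := by
      rw [← Complex.ofReal_sum, hp1, Complex.ofReal_one]
    rw [h1]
    field_simp
    ring
  constructor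
  · intro m
    have h2 : ((1 - ρ m) * X).trace = -((p m : ℂ) - 1 / d) := by
      rw [sub_mul, one_mul, trace_sub, htrX, key, zero_sub]
    have habs : Norm.norm ((p m : ℂ) - 1 / d) = |p m - 1 / d| := by
      have : ((p m : ℂ) - 1 / d) = ((p m - 1 / d : ℝ) : ℂ) := by push_cast; ring
      rw [this, Complex.norm_real, Real.norm_eq_abs]
    rw [key, h2, norm_neg, habs]
    ring
  · intro m
    have hsumsq : (1 : ℝ) / d ≤ ∑ n, p n ^ 2 := by
      have := sq_sum_le_card_mul_sum_sq (s := Finset.univ) (f := p)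
      rw [hp1, Finset.card_univ, Fintype.card_fin] at this
      rw [div_le_iff₀ (by exact_mod_cast hd)]
      calc (1 : ℝ) = 1 ^ 2 := by ring
        _ ≤ d * ∑ n, p n ^ 2 := by simpa [mul_comm] using this
        _ = (∑ n, p n ^ 2) * d := by ring
    have hd1 : (1 : ℝ) ≤ d := by exact_mod_cast hd
    rcases le_or_gt (1 / (d:ℝ)) (p m) with h | h
    · rw [abs_of_nonneg (by linarith)]
      have : p m ≤ Real.sqrt (∑ n, p n ^ 2) := by
        rw [show p m = Real.sqrt (p m ^ 2) from (Real.sqrt_sq (hp m)).symm]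
        apply Real.sqrt_le_sqrt
        exact Finset.single_le_sum (fun n _ => sq_nonneg (p n)) (Finset.mem_univ m)
      have h0 : 0 < (d : ℝ) := by exact_mod_cast hd
      have : (0:ℝ) ≤ 1 / d := by positivity
      linarith [this]
    · rw [abs_of_neg (by linarith)]
      have h0 : 0 < (d : ℝ) := by exact_mod_cast hd
      have h1d : (1 : ℝ) / d ≤ Real.sqrt (1 / d) := by
        rw [Real.le_sqrt (by positivity)]
        have : (1:ℝ)/d ≤ 1 := by rw [div_le_one h0]; exact hd1
        nlinarith [le_of_lt (show (0:ℝ) < 1/d by positivity)]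
        positivity
      have := Real.sqrt_le_sqrt hsumsq
      linarith [hp m]
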